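/- Assume in addition that C is braided monoidal. Then for all objects x and y of C, the translation endofunctor τ_x and the difference endofunctor δ_y commute up to natural isomorphism: there is a natural isomorphism τ_x ∘ δ_y ≅ δ_y ∘ τ_x of endofunctors of Fct(C, A). -/

import Mathlib

open CategoryTheory CategoryTheory.Limits CategoryTheory.MonoidalCategory

variable {C : Type*} [Category C] [MonoidalCategory C]
variable {A : Type*} [Category A] [Abelian A]

/-- The translation endofunctor `τ_x` of `Fct(C, A)`: precomposition with `x ⊗ -`. -/
noncomputable def tauF (A : Type*) [Category A] (x : C) : (C ⥤ A) ⥤ (C ⥤ A) :=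
  (Functor.whiskeringLeft C C A).obj (tensorLeft x)

/-- The component `i_x(F) : F ⟶ τ_x F`, whose component at `c` is
`F` applied to `c ≅ 𝟙 ⊗ c ⟶ x ⊗ c`. -/
def iApp (hI : IsInitial (𝟙_ C)) (x : C) (F : C ⥤ A) : F ⟶ tensorLeft x ⋙ F where
  app c := F.map ((λ_ c).inv ≫ hI.to x ▷ c)
  naturality c c' f := by
    dsimp
    rw [← F.map_comp, ← F.map_comp]
    congr 1
    rw [leftUnitor_inv_naturality_assoc, whisker_exchange, Category.assoc]

/-- The natural transformation `i_x : Id ⟶ τ_x` of endofunctors of `Fct(C, A)`. -/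
noncomputable def iNT (hI : IsInitial (𝟙_ C)) (x : C) :
    𝟭 (C ⥤ A) ⟶ tauF A x where
  app F := iApp hI x F
  naturality F G η := by
    ext c
    exact (η.naturality _).symm

/-- The evanescence endofunctor `κ_x = ker(i_x)` of `Fct(C, A)`. -/
noncomputable def kappaF (hI : IsInitial (𝟙_ C)) (x : C) : (C ⥤ A) ⥤ (C ⥤ A) :=
  kernel (iNT (A := A) hI x)

/-- The difference endofunctor `δ_x = coker(i_x)` of `Fct(C, A)`. -/
noncomputable def deltaF (hI : IsInitial (𝟙_ C)) (x : C) : (C ⥤ A) ⥤ (C ⥤ A) :=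
  cokernel (iNT (A := A) hI x)


section Auxiliary

lemma key_coherence [BraidedCategory C] (hI : IsInitial (𝟙_ C)) (x y c : C) :
    (λ_ (x ⊗ c)).inv ≫ hI.to y ▷ (x ⊗ c) ≫ (α_ y x c).inv ≫ (β_ x y).inv ▷ c ≫ (α_ x y c).hom
      = x ◁ ((λ_ c).inv ≫ hI.to y ▷ c) := by
  have h2 : hI.to y ▷ x ≫ (β_ x y).inv = (β_ x (𝟙_ C)).inv ≫ x ◁ hI.to y := by
    rw [Iso.eq_inv_comp, ← Category.assoc, Iso.comp_inv_eq]
    exact (BraidedCategory.braiding_naturality_right x (hI.to y)).symm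
  have h3 : (λ_ x).inv ≫ (β_ x (𝟙_ C)).inv = (ρ_ x).inv := by
    rw [Iso.inv_comp_eq, Iso.eq_comp_inv, ← braiding_leftUnitor x]
    simp
  have h4 : (ρ_ x).inv ▷ c ≫ (α_ x (𝟙_ C) c).hom = x ◁ (λ_ c).inv := by
    rw [← Iso.eq_comp_inv]
    simp [triangle_assoc_comp_right_inv]
  rw [leftUnitor_tensor_inv]
  slice_lhs 3 4 => rw [associator_inv_naturality_left]
  slice_lhs 2 3 => rw [Iso.hom_inv_id]
  rw [Category.id_comp]
  slice_lhs 2 3 => rw [← comp_whiskerRight, h2, comp_whiskerRight]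
  slice_lhs 1 2 => rw [← comp_whiskerRight, h3]
  slice_lhs 2 3 => rw [associator_naturality_middle]
  slice_lhs 1 2 => rw [h4]
  rw [← MonoidalCategory.whiskerLeft_comp]

/-- The braiding-induced isomorphism `(x ⊗ -) ⋙ (y ⊗ -) ≅ (y ⊗ -) ⋙ (x ⊗ -)`. -/
noncomputable def swapTensorLeft [BraidedCategory C] (x y : C) :
    tensorLeft x ⋙ tensorLeft y ≅ tensorLeft y ⋙ tensorLeft x :=
  NatIso.ofComponents
    (fun c => (α_ y x c).symm ≪≫ whiskerRightIso (β_ x y).symm c ≪≫ α_ x y c)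
    (fun f => by
      dsimp [whiskerRightIso]
      rw [associator_inv_naturality_right_assoc, whisker_exchange_assoc, Category.assoc,
        associator_naturality_right]
      simp)

instance tauF_pz (x : C) : (tauF A x).PreservesZeroMorphisms :=
  ⟨by intros; ext; simp [tauF]; rfl⟩

instance wr_pz (x : C) :
    (((Functor.whiskeringRight (C ⥤ A) (C ⥤ A) (C ⥤ A)).obj (tauF A x))).PreservesZeroMorphisms :=
  ⟨by intros; ext; simp [tauF]; rfl⟩

instance wl_pz (x : C) :
    (((Functor.whiskeringLeft (C ⥤ A) (C ⥤ A) (C ⥤ A)).obj (tauF A x))).PreservesZeroMorphisms :=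
  ⟨by intros; ext; simp⟩

/-- `τ_y ⋙ τ_x ≅ τ_x ⋙ τ_y` via the braiding. -/
noncomputable def qIso [BraidedCategory C] (x y : C) :
    (tauF A y ⋙ tauF A x : (C ⥤ A) ⥤ (C ⥤ A)) ≅ tauF A x ⋙ tauF A y :=
  NatIso.ofComponents
    (fun F => Functor.isoWhiskerRight (swapTensorLeft x y) F)
    (fun η => by
      ext c
      exact (η.naturality _).symm)

noncomputable instance tauF_pc (x : C) :
    PreservesColimitsOfShape WalkingParallelPair (tauF A x) :=
  inferInstanceAs (PreservesColimitsOfShape WalkingParallelPair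
    ((Functor.whiskeringLeft C C A).obj (tensorLeft x)))

end Auxiliary

/-- The translation and difference endofunctors commute up to natural isomorphism:
`τ_x ∘ δ_y ≅ δ_y ∘ τ_x`. -/
theorem tau_comm_delta [BraidedCategory C] (hI : IsInitial (𝟙_ C)) (x y : C) :
    Nonempty ((deltaF (A := A) hI y ⋙ tauF A x) ≅ (tauF A x ⋙ deltaF hI y)) := by
  constructor
  refine Iso.trans ?i1 (Iso.trans (cokernel.mapIso
      (((Functor.whiskeringRight (C ⥤ A) (C ⥤ A) (C ⥤ A)).obj (tauF A x)).map (iNT (A := A) hI y))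
      (((Functor.whiskeringLeft (C ⥤ A) (C ⥤ A) (C ⥤ A)).obj (tauF A x)).map (iNT (A := A) hI y))
      ((tauF A x).leftUnitor ≪≫ (tauF A x).rightUnitor.symm) (qIso x y) ?w) ?i2)
  case i1 =>
    exact PreservesCokernel.iso
      ((Functor.whiskeringRight (C ⥤ A) (C ⥤ A) (C ⥤ A)).obj (tauF A x)) (iNT (A := A) hI y)
  case i2 =>
    exact (PreservesCokernel.iso
      ((Functor.whiskeringLeft (C ⥤ A) (C ⥤ A) (C ⥤ A)).obj (tauF A x)) (iNT (A := A) hI y)).symm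
  case w =>
  ext F c
  dsimp [qIso, swapTensorLeft, iNT, iApp, tauF, Functor.isoWhiskerRight, NatIso.ofComponents, whiskerRightIso]
  rw [← Functor.map_comp, Category.assoc]
  simp only [Category.id_comp]
  exact congrArg F.map (key_coherence hI x y c)
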